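/- Let v¹, …, vᵐ ∈ ℝ² be nonzero vectors such that ‖x‖_N = max_{1 ≤ k' ≤ m} |⟨x, v^{k'}⟩| defines a norm on ℝ², let 0 < q < 1, and let z¹, z², … be a sequence of points of ℝ² such that ‖z^i − z^j‖_N = (q^i − q^j)/(1−q) for all i < j. Suppose k ∈ {1, …, m} is such that ‖z^i − z^j‖_N = ⟨z^i − z^j, vᵏ⟩ for all i < j. Then for every u' ∈ ℝ² with ‖u'‖_N = 1 and ⟨u', vᵏ⟩ = 1, the point z⁰ = z¹ + u' satisfies ‖z⁰ − z^i‖_N = (1 − q^i)/(1−q) for all i ≥ 1; consequently the set {z⁰, z¹, z², …} is an N-isometric copy of the geometric progression G(q). -/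

import Mathlib

/-- The standard Euclidean inner product on the plane. -/
def dot2 (x y : Fin 2 → ℝ) : ℝ := x 0 * y 0 + x 1 * y 1

/-- The geometric progression G(q) = {0, 1, 1+q, 1+q+q², …} ⊆ ℝ. -/
def geomProg (q : ℝ) : Set ℝ :=
  {x | x = 0 ∨ ∃ i : ℕ, 1 ≤ i ∧ x = (1 - q ^ i) / (1 - q)}

/-- `M'` is an `N`-isometric copy (in the plane) of the set of reals `M`:
there is a bijection from `M` onto `M'` carrying absolute differences to `N`-distances. -/
def IsometricCopyOfReals (N : (Fin 2 → ℝ) → ℝ) (M : Set ℝ) (M' : Set (Fin 2 → ℝ)) : Prop :=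
  ∃ f : ℝ → (Fin 2 → ℝ), Set.BijOn f M M' ∧ ∀ x ∈ M, ∀ y ∈ M, N (f x - f y) = |x - y|

/-- Extension lemma: if the copy `z¹, z², …` of G(q)∖{0} has direction `vᵏ`, then adding
any point `z⁰ = z¹ + u'` with `‖u'‖_N = 1` and `⟨u', vᵏ⟩ = 1` yields an `N`-isometric
copy of G(q). -/
theorem extend_geometric_copy (m : ℕ) (hm : 0 < m)
    (v : Fin m → (Fin 2 → ℝ)) (hv : ∀ k', v k' ≠ 0)
    (N : (Fin 2 → ℝ) → ℝ)
    (hNmax : ∀ x, IsGreatest (Set.range fun k' => |dot2 x (v k')|) (N x))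
    (hNnorm : ∀ x, N x = 0 → x = 0)
    (q : ℝ) (hq0 : 0 < q) (hq1 : q < 1)
    (z : ℕ → (Fin 2 → ℝ))
    (hz : ∀ i j : ℕ, 1 ≤ i → i < j → N (z i - z j) = (q ^ i - q ^ j) / (1 - q))
    (k : Fin m)
    (hk : ∀ i j : ℕ, 1 ≤ i → i < j → N (z i - z j) = dot2 (z i - z j) (v k))
    (u' : Fin 2 → ℝ) (hu'1 : N u' = 1) (hu'2 : dot2 u' (v k) = 1) :
    (∀ i : ℕ, 1 ≤ i → N ((z 1 + u') - z i) = (1 - q ^ i) / (1 - q)) ∧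
      IsometricCopyOfReals N (geomProg q)
        ({z 1 + u'} ∪ {w | ∃ i : ℕ, 1 ≤ i ∧ w = z i}) := by
  classical
  have hq' : (1 : ℝ) - q ≠ 0 := by linarith
  have hqpos : (0 : ℝ) < 1 - q := by linarith
  -- basic facts about N
  have hle : ∀ x (k' : Fin m), |dot2 x (v k')| ≤ N x := fun x k' =>
    (hNmax x).2 ⟨k', rfl⟩
  have hmem : ∀ x, ∃ k', N x = |dot2 x (v k')| := by
    intro x
    obtain ⟨k', hk'⟩ := (hNmax x).1
    exact ⟨k', hk'.symm⟩
  have hdotadd : ∀ x y w : Fin 2 → ℝ, dot2 (x + y) w = dot2 x w + dot2 y w := by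
    intro x y w; simp [dot2]; ring
  have hdotneg : ∀ x w : Fin 2 → ℝ, dot2 (-x) w = - dot2 x w := by
    intro x w; simp [dot2]; ring
  have hN0 : N 0 = 0 := by
    obtain ⟨k', hk'⟩ := hmem 0
    simpa [dot2] using hk'
  have hNneg : ∀ x, N (-x) = N x := by
    have key : ∀ x, N (-x) ≤ N x := by
      intro x
      obtain ⟨k', hk'⟩ := hmem (-x)
      rw [hk', hdotneg, abs_neg]
      exact hle x k'
    intro x
    refine le_antisymm (key x) ?_
    have := key (-x)
    rwa [neg_neg] at this
  have hNsub : ∀ a b, N (a - b) = N (b - a) := by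
    intro a b
    have : a - b = -(b - a) := by abel
    rw [this, hNneg]
  have hNadd : ∀ x y, N (x + y) ≤ N x + N y := by
    intro x y
    obtain ⟨k', hk'⟩ := hmem (x + y)
    rw [hk', hdotadd]
    exact (abs_add_le _ _).trans (add_le_add (hle x k') (hle y k'))
  -- strict monotonicity of s i = (1 - q^i)/(1-q)
  have hpow : ∀ i j : ℕ, i < j → q ^ j < q ^ i := fun i j hij =>
    pow_lt_pow_right_of_lt_one₀ hq0 hq1 hij
  have smono : ∀ i j : ℕ, i < j → (1 - q ^ i) / (1 - q) < (1 - q ^ j) / (1 - q) := by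
    intro i j hij
    have := hpow i j hij
    gcongr <;> linarith
  have spos : ∀ i : ℕ, 1 ≤ i → 0 < (1 - q ^ i) / (1 - q) := by
    intro i hi
    apply div_pos _ hqpos
    have : q ^ i < 1 := pow_lt_one₀ hq0.le hq1 (by omega)
    linarith
  -- Part 1
  have hpart1 : ∀ i : ℕ, 1 ≤ i → N ((z 1 + u') - z i) = (1 - q ^ i) / (1 - q) := by
    intro i hi
    rcases eq_or_lt_of_le hi with h1 | h1
    · rw [← h1]
      have hrw : (z 1 + u') - z 1 = u' := by abel
      rw [hrw, hu'1, pow_one]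
      field_simp
    · have hd := hz 1 i le_rfl h1
      have hdk := hk 1 i le_rfl h1
      have hrw : (z 1 + u') - z i = u' + (z 1 - z i) := by abel
      have hdnn : 0 ≤ N (z 1 - z i) := by
        rw [hd]
        apply le_of_lt
        apply div_pos _ hqpos
        have := hpow 1 i h1
        linarith
      have hup : N ((z 1 + u') - z i) ≤ 1 + N (z 1 - z i) := by
        rw [hrw]
        calc N (u' + (z 1 - z i)) ≤ N u' + N (z 1 - z i) := hNadd _ _
          _ = 1 + N (z 1 - z i) := by rw [hu'1]
      have hlow : 1 + N (z 1 - z i) ≤ N ((z 1 + u') - z i) := by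
        have h2 := hle ((z 1 + u') - z i) k
        have h3 : dot2 ((z 1 + u') - z i) (v k) = 1 + N (z 1 - z i) := by
          rw [hrw, hdotadd, hu'2, ← hdk]
        calc 1 + N (z 1 - z i) = dot2 ((z 1 + u') - z i) (v k) := h3.symm
          _ ≤ |dot2 ((z 1 + u') - z i) (v k)| := le_abs_self _
          _ ≤ N ((z 1 + u') - z i) := h2
      have heq : N ((z 1 + u') - z i) = 1 + N (z 1 - z i) := le_antisymm hup hlow
      rw [heq, hd]
      field_simp
      ring
  refine ⟨hpart1, ?_⟩
  -- injectivity facts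
  have zinj : ∀ i j : ℕ, 1 ≤ i → 1 ≤ j → z i = z j → i = j := by
    intro i j hi hj hij
    by_contra hne
    rcases lt_or_gt_of_ne hne with h | h
    · have := hz i j hi h
      rw [hij, sub_self, hN0] at this
      have := hpow i j h
      have : (0:ℝ) < (q ^ i - q ^ j) / (1 - q) := div_pos (by linarith) hqpos
      linarith
    · have := hz j i hj h
      rw [hij, sub_self, hN0] at this
      have := hpow j i h
      have : (0:ℝ) < (q ^ j - q ^ i) / (1 - q) := div_pos (by linarith) hqpos
      linarith
  have zne0 : ∀ i : ℕ, 1 ≤ i → z 1 + u' ≠ z i := by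
    intro i hi heq
    have := hpart1 i hi
    rw [heq, sub_self, hN0] at this
    exact absurd this.symm (ne_of_gt (spos i hi))
  have sinj : ∀ i j : ℕ, (1 - q ^ i) / (1 - q) = (1 - q ^ j) / (1 - q) → i = j := by
    intro i j hij
    by_contra hne
    rcases lt_or_gt_of_ne hne with h | h
    · exact absurd hij (ne_of_lt (smono i j h))
    · exact absurd hij.symm (ne_of_lt (smono j i h))
  -- the bijection
  set f : ℝ → (Fin 2 → ℝ) := fun x =>
    if h : ∃ i : ℕ, 1 ≤ i ∧ x = (1 - q ^ i) / (1 - q) then z h.choose else z 1 + u' with hf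
  have hf_s : ∀ i : ℕ, 1 ≤ i → f ((1 - q ^ i) / (1 - q)) = z i := by
    intro i hi
    have hex : ∃ j : ℕ, 1 ≤ j ∧ (1 - q ^ i) / (1 - q) = (1 - q ^ j) / (1 - q) :=
      ⟨i, hi, rfl⟩
    rw [hf]
    simp only [dif_pos hex]
    exact congrArg z (sinj _ _ hex.choose_spec.2.symm)
  have hf_0 : f 0 = z 1 + u' := by
    rw [hf]
    apply dif_neg
    rintro ⟨i, hi, hi2⟩
    exact absurd hi2.symm (ne_of_gt (spos i hi))
  -- distance computation
  have hdists : ∀ i j : ℕ, 1 ≤ i → 1 ≤ j →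
      N (z i - z j) = |(1 - q ^ i) / (1 - q) - (1 - q ^ j) / (1 - q)| := by
    intro i j hi hj
    rcases lt_trichotomy i j with h | h | h
    · rw [hz i j hi h, abs_of_nonpos (by linarith [smono i j h])]
      field_simp
      ring
    · rw [h, sub_self, sub_self, hN0, abs_zero]
    · rw [hNsub, hz j i hj h, abs_of_nonneg (by linarith [smono j i h])]
      field_simp
      ring
  have hdist0 : ∀ i : ℕ, 1 ≤ i →
      N ((z 1 + u') - z i) = |0 - (1 - q ^ i) / (1 - q)| := by
    intro i hi
    rw [hpart1 i hi, abs_of_nonpos (by linarith [spos i hi])]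
    ring
  refine ⟨f, ⟨?_, ?_, ?_⟩, ?_⟩
  · -- MapsTo
    rintro x (hx | ⟨i, hi, rfl⟩)
    · rw [hx, hf_0]
      exact Or.inl rfl
    · rw [hf_s i hi]
      exact Or.inr ⟨i, hi, rfl⟩
  · -- InjOn
    rintro x (hx | ⟨i, hi, rfl⟩) y (hy | ⟨j, hj, rfl⟩) hxy
    · rw [hx, hy]
    · rw [hx, hf_0, hf_s j hj] at hxy
      exact absurd hxy (zne0 j hj)
    · rw [hy, hf_0, hf_s i hi] at hxy
      exact absurd hxy.symm (zne0 i hi)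
    · rw [hf_s i hi, hf_s j hj] at hxy
      rw [zinj i j hi hj hxy]
  · -- SurjOn
    rintro w (hw | ⟨i, hi, rfl⟩)
    · rw [Set.mem_singleton_iff] at hw
      exact ⟨0, Or.inl rfl, by rw [hf_0, hw]⟩
    · exact ⟨(1 - q ^ i) / (1 - q), Or.inr ⟨i, hi, rfl⟩, hf_s i hi⟩
  · -- isometry
    rintro x (hx | ⟨i, hi, rfl⟩) y (hy | ⟨j, hj, rfl⟩)
    · rw [hx, hy, hf_0, sub_self, hN0, sub_self, abs_zero]
    · rw [hx, hf_0, hf_s j hj]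
      exact hdist0 j hj
    · rw [hy, hf_0, hf_s i hi, hNsub, hdist0 i hi, abs_sub_comm]
    · rw [hf_s i hi, hf_s j hj]
      exact hdists i j hi hj
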